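/- arXiv:2511.12620 — 2 statements merged into one kernel-verified Lean document; each statement's English description precedes it below -/
import Mathlib

section
/- Let m ≥ 2, and for t = 1, …, j let wₜ ∈ ℝ^m with 1ᵀ wₜ = 0 and Wₜ ∈ ℝ^{m×m} with 1ᵀ Wₜ = 1ᵀ and Wₜ 1 = 1. Define W̌ₜ = (1/√(m-1)) wₜ 1ᵀ + Wₜ, Wⱼᵖʳᵒᵈ = W₁ ⋯ Wⱼ (with W₀ᵖʳᵒᵈ = I), and wⱼᵖʳᵒᵈ = Σ_{t=1}^{j} W_{t-1}ᵖʳᵒᵈ wₜ. Then the product W̌ⱼᵖʳᵒᵈ := W̌₁ ⋯ W̌ⱼ decomposes as W̌ⱼᵖʳᵒᵈ = (1/√(m-1)) wⱼᵖʳᵒᵈ 1ᵀ + Wⱼᵖʳᵒᵈ. -/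
open Matrix

noncomputable def ones (m : ℕ) : Fin m → ℝ := fun _ => 1

noncomputable def eMean {n m : ℕ} (X : Matrix (Fin n) (Fin m) ℝ) : Fin n → ℝ :=
  fun i => (1 / (m : ℝ)) * ∑ j, X i j

noncomputable def pert {n m : ℕ} (X : Matrix (Fin n) (Fin m) ℝ) : Matrix (Fin n) (Fin m) ℝ :=
  X - Matrix.vecMulVec (eMean X) (ones m)

/-- Apply a linear map to each column of a matrix. -/
noncomputable def appCols {n m : ℕ} (M : (Fin n → ℝ) →ₗ[ℝ] (Fin n → ℝ))
    (X : Matrix (Fin n) (Fin m) ℝ) : Matrix (Fin n) (Fin m) ℝ :=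
  Matrix.of fun i j => M (fun i' => X i' j) i

/-- Ordered product W 1 * W 2 * ⋯ * W j (with empty product = identity). -/
noncomputable def prodUpTo {m : ℕ} (W : ℕ → Matrix (Fin m) (Fin m) ℝ) : ℕ → Matrix (Fin m) (Fin m) ℝ
  | 0 => 1
  | t + 1 => prodUpTo W t * W (t + 1)


lemma vmv_mul {m : ℕ} (u v : Fin m → ℝ) (W : Matrix (Fin m) (Fin m) ℝ) :
    Matrix.vecMulVec u v * W = Matrix.vecMulVec u (Matrix.vecMul v W) := by
  ext i k
  simp [Matrix.mul_apply, Matrix.vecMulVec_apply, Matrix.vecMul, dotProduct,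
    Finset.mul_sum, mul_assoc]

lemma mul_vmv {m : ℕ} (u v : Fin m → ℝ) (W : Matrix (Fin m) (Fin m) ℝ) :
    W * Matrix.vecMulVec u v = Matrix.vecMulVec (W.mulVec u) v := by
  ext i k
  simp [Matrix.mul_apply, Matrix.vecMulVec_apply, Matrix.mulVec, dotProduct,
    Finset.sum_mul, mul_assoc]

lemma vmv_mul_vmv {m : ℕ} (u v x y : Fin m → ℝ) :
    Matrix.vecMulVec u v * Matrix.vecMulVec x y = (v ⬝ᵥ x) • Matrix.vecMulVec u y := by
  ext i k
  simp [Matrix.mul_apply, Matrix.vecMulVec_apply, dotProduct, Finset.sum_mul,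
    Finset.mul_sum]
  ring_nf
  congr 1; ext t; ring

lemma vmv_add {m : ℕ} (u x v : Fin m → ℝ) :
    Matrix.vecMulVec (u + x) v = Matrix.vecMulVec u v + Matrix.vecMulVec x v := by
  ext i k; simp [Matrix.vecMulVec_apply]; ring

lemma vmv_zero {m : ℕ} (v : Fin m → ℝ) : Matrix.vecMulVec (0 : Fin m → ℝ) v = 0 := by
  ext i k; simp [Matrix.vecMulVec_apply]

lemma prod_mulVec_ones {m : ℕ} (W : ℕ → Matrix (Fin m) (Fin m) ℝ) (n : ℕ)
    (hW2 : ∀ t, 1 ≤ t → t ≤ n → (W t).mulVec (ones m) = ones m) :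
    (prodUpTo W n).mulVec (ones m) = ones m := by
  induction n with
  | zero => simp [prodUpTo]
  | succ k ih =>
    rw [prodUpTo, ← Matrix.mulVec_mulVec, hW2 (k + 1) (by omega) le_rfl,
      ih (fun t h1 h2 => hW2 t h1 (by omega))]

/-- the product of ETKF ensemble transform matrices decomposes as
`W̌ⱼᵖʳᵒᵈ = (1/√(m-1)) wⱼᵖʳᵒᵈ 1ᵀ + Wⱼᵖʳᵒᵈ`. -/
theorem stmt5 {m : ℕ} (hm : 2 ≤ m) (j : ℕ)
    (w : ℕ → Fin m → ℝ) (W Wcheck : ℕ → Matrix (Fin m) (Fin m) ℝ)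
    (hw : ∀ t, 1 ≤ t → t ≤ j → ∑ i, w t i = 0)
    (hW1 : ∀ t, 1 ≤ t → t ≤ j → Matrix.vecMul (ones m) (W t) = ones m)
    (hW2 : ∀ t, 1 ≤ t → t ≤ j → (W t).mulVec (ones m) = ones m)
    (hWcheck : ∀ t, 1 ≤ t → t ≤ j →
      Wcheck t = (1 / Real.sqrt ((m : ℝ) - 1)) • Matrix.vecMulVec (w t) (ones m) + W t) :
    prodUpTo Wcheck j =
      (1 / Real.sqrt ((m : ℝ) - 1)) •
        Matrix.vecMulVec (∑ t ∈ Finset.range j, (prodUpTo W t).mulVec (w (t + 1))) (ones m) +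
      prodUpTo W j := by
  induction j with
  | zero =>
    simp [prodUpTo, vmv_zero]
  | succ n ih =>
    have ih' := ih (fun t h1 h2 => hw t h1 (h2.trans (Nat.le_succ n)))
      (fun t h1 h2 => hW1 t h1 (h2.trans (Nat.le_succ n)))
      (fun t h1 h2 => hW2 t h1 (h2.trans (Nat.le_succ n)))
      (fun t h1 h2 => hWcheck t h1 (h2.trans (Nat.le_succ n)))
    have hsucc : 1 ≤ n + 1 := Nat.succ_le_succ (Nat.zero_le n)
    have hd : ones m ⬝ᵥ w (n + 1) = 0 := by
      simpa [dotProduct, ones] using hw (n + 1) hsucc le_rfl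
    rw [prodUpTo, ih', hWcheck (n + 1) hsucc le_rfl]
    rw [add_mul, mul_add, mul_add, Matrix.smul_mul, Matrix.mul_smul,
      Matrix.smul_mul, Matrix.mul_smul, vmv_mul_vmv, hd, zero_smul, smul_zero,
      vmv_mul, hW1 (n + 1) hsucc le_rfl, mul_vmv,
      Finset.sum_range_succ, vmv_add]
    simp only [smul_zero, smul_add, zero_add, prodUpTo]
    abel
end

section
/- Let X ∈ ℝ^{n×m} have ensemble covariance P = (1/(m-1)) δX δXᵀ, and let W̌ ∈ ℝ^{m×m} satisfy 1ᵀ W̌ = 1ᵀ. If additionally W̌ = (1/√(m-1)) w 1ᵀ + W with 1ᵀ w = 0 and 1ᵀ W = 1ᵀ, then the ensemble covariance of X W̌ equals (1/(m-1)) δX W Q Wᵀ δXᵀ where Q = I − (1/m) J is the centering projection and J = 11ᵀ. In particular, if W 1 = 1, the covariance of X W̌ is (1/(m-1)) δX W Wᵀ δXᵀ − (1/(m-1))(1/m) δX W J Wᵀ δXᵀ, and when W is the symmetric square root with W 1 = 1, this simplifies using δX (1/m) W J Wᵀ δXᵀ = (1/m) δX J δXᵀ = 0, giving covariance (1/(m-1))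 δX W Wᵀ δXᵀ. -/
open Matrix

/-- Ensemble covariance `P = (1/(m-1)) δX δXᵀ`. -/
noncomputable def eCov {n m : ℕ} (X : Matrix (Fin n) (Fin m) ℝ) : Matrix (Fin n) (Fin n) ℝ :=
  (1 / ((m : ℝ) - 1)) • (pert X * (pert X)ᵀ)

private lemma pert_eq' {n m : ℕ} (Y : Matrix (Fin n) (Fin m) ℝ) :
    pert Y = Y - ((1:ℝ)/m) • (Y * Matrix.vecMulVec (ones m) (ones m)) := by
  ext i j
  simp [pert, Matrix.vecMulVec_apply, eMean, ones, Matrix.mul_apply, Matrix.sub_apply]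

private lemma JJ' (m : ℕ) :
    (Matrix.vecMulVec (ones m) (ones m)) * (Matrix.vecMulVec (ones m) (ones m))
      = (m:ℝ) • Matrix.vecMulVec (ones m) (ones m) := by
  ext i j
  simp [Matrix.mul_apply, Matrix.vecMulVec_apply, ones]

/-- transformation of the ensemble covariance under right
multiplication by an ensemble transform matrix. -/
theorem stmt18 {n m : ℕ} (hm : 2 ≤ m)
    (X : Matrix (Fin n) (Fin m) ℝ)
    (Wcheck : Matrix (Fin m) (Fin m) ℝ)
    (hWc : Matrix.vecMul (ones m) Wcheck = ones m)
    (w : Fin m → ℝ) (hw : ∑ i, w i = 0)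
    (W : Matrix (Fin m) (Fin m) ℝ)
    (hW : Matrix.vecMul (ones m) W = ones m)
    (hdec : Wcheck = (1 / Real.sqrt ((m : ℝ) - 1)) • Matrix.vecMulVec w (ones m) + W) :
    (eCov (X * Wcheck) = (1 / ((m : ℝ) - 1)) •
      (pert X * W *
        ((1 : Matrix (Fin m) (Fin m) ℝ) -
          (1 / (m : ℝ)) • Matrix.vecMulVec (ones m) (ones m)) * Wᵀ * (pert X)ᵀ)) ∧
    (W.mulVec (ones m) = ones m →
      eCov (X * Wcheck) = (1 / ((m : ℝ) - 1)) • (pert X * W * Wᵀ * (pert X)ᵀ)) := by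
  have hm0 : (m:ℝ) ≠ 0 := by
    have h2 : (2:ℝ) ≤ (m:ℝ) := by exact_mod_cast hm
    exact ne_of_gt (by linarith)
  set J : Matrix (Fin m) (Fin m) ℝ := Matrix.vecMulVec (ones m) (ones m) with hJ
  set Q : Matrix (Fin m) (Fin m) ℝ := (1 : Matrix (Fin m) (Fin m) ℝ) - (1/(m:ℝ)) • J with hQdef
  have hJJ : J * J = (m:ℝ) • J := JJ' m
  have hQJ : Q * J = 0 := by
    rw [hQdef, sub_mul, one_mul, smul_mul_assoc, hJJ, smul_smul, one_div,
      inv_mul_cancel₀ hm0, one_smul, sub_self]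
  have hJQ : J * Q = 0 := by
    rw [hQdef, mul_sub, mul_one, mul_smul_comm, hJJ, smul_smul, one_div,
      inv_mul_cancel₀ hm0, one_smul, sub_self]
  have hpert : ∀ Y : Matrix (Fin n) (Fin m) ℝ, pert Y = Y * Q := by
    intro Y
    rw [pert_eq', hQdef, Matrix.mul_sub, Matrix.mul_one, Matrix.mul_smul]
  have hJM : ∀ M : Matrix (Fin m) (Fin m) ℝ, Matrix.vecMul (ones m) M = ones m → J * M = J := by
    intro M hM
    ext i j
    have h := congrFun hM j
    simp [Matrix.vecMul, dotProduct, ones] at h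
    simp [hJ, Matrix.mul_apply, Matrix.vecMulVec_apply, ones, h]
  have hwQ : Matrix.vecMulVec w (ones m) * Q = 0 := by
    have h1 : Matrix.vecMulVec w (ones m) * J = (m:ℝ) • Matrix.vecMulVec w (ones m) := by
      ext i j; simp [hJ, Matrix.mul_apply, Matrix.vecMulVec_apply, ones, mul_comm]
    rw [hQdef, mul_sub, mul_one, mul_smul_comm, h1, smul_smul, one_div,
      inv_mul_cancel₀ hm0, one_smul, sub_self]
  have hWcQ : Wcheck * Q = W * Q := by
    rw [hdec, add_mul, smul_mul_assoc, hwQ, smul_zero, zero_add]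
  have hJWQ : J * (W * Q) = 0 := by rw [← mul_assoc, hJM W hW, hJQ]
  have hXd : X - X * Q = (1/(m:ℝ)) • (X * J) := by
    rw [hQdef, Matrix.mul_sub, Matrix.mul_one, Matrix.mul_smul, sub_sub_cancel]
  have key : pert (X * Wcheck) = pert X * W * Q := by
    rw [hpert, hpert, Matrix.mul_assoc, hWcQ]
    have h0 : X * (W * Q) - (X * Q) * (W * Q) = 0 := by
      rw [← Matrix.sub_mul, hXd, Matrix.smul_mul, Matrix.mul_assoc, hJWQ, Matrix.mul_zero,
        smul_zero]
    rw [sub_eq_zero.mp h0, ← Matrix.mul_assoc]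
  have hJT : Jᵀ = J := by
    ext i j; simp [hJ, Matrix.vecMulVec_apply, ones]
  have hQT : Qᵀ = Q := by
    rw [hQdef, transpose_sub, transpose_one, transpose_smul, hJT]
  have hQQ : Q * Q = Q := by
    calc Q * Q = Q * ((1 : Matrix (Fin m) (Fin m) ℝ) - (1/(m:ℝ)) • J) := by rw [← hQdef]
      _ = Q - (1/(m:ℝ)) • (Q * J) := by rw [mul_sub, mul_one, mul_smul_comm]
      _ = Q := by rw [hQJ, smul_zero, sub_zero]
  have main : eCov (X * Wcheck) = (1/((m:ℝ)-1)) • (pert X * W * Q * Wᵀ * (pert X)ᵀ) := by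
    rw [eCov, key]
    have h : (pert X * W * Q) * (pert X * W * Q)ᵀ = pert X * W * Q * Wᵀ * (pert X)ᵀ := by
      rw [transpose_mul, transpose_mul, hQT, ← Matrix.mul_assoc,
        Matrix.mul_assoc (pert X * W) Q Q, hQQ, ← Matrix.mul_assoc]
    rw [h]
  refine ⟨main, fun h1 => ?_⟩
  have hWJ : W * J = J := by
    ext i j
    have h := congrFun h1 i
    simp [Matrix.mulVec, dotProduct, ones] at h
    simp [hJ, Matrix.mul_apply, Matrix.vecMulVec_apply, ones, h]
  have hXJ : pert X * J = 0 := by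
    rw [hpert, Matrix.mul_assoc, hQJ, Matrix.mul_zero]
  rw [main]
  congr 1
  have hQW : pert X * W * Q = pert X * W - (1/(m:ℝ)) • (pert X * J) := by
    rw [hQdef, Matrix.mul_sub, Matrix.mul_one, Matrix.mul_smul, Matrix.mul_assoc, hWJ]
  rw [hQW, hXJ, smul_zero, sub_zero]
end
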